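/- Let f : ℝ → ℝ be twice continuously differentiable on [a - σ/2, a + σ/2] where σ > 0. Then ∫_{a}^{a+σ/2} f(t) dt = (σ/4)(3 f(a) - f(a - σ/2)) + R, where |R| ≤ (5σ³/96) · sup_{t ∈ [a-σ/2, a+σ/2]} |f''(t)|. -/

import Mathlib

open intervalIntegral Set

private lemma ftc_aux (c d : ℝ) (hcd : c ≤ d) (G g : ℝ → ℝ)
    (hG : ContinuousOn G (Icc c d))
    (hd : ∀ t ∈ Ioo c d, HasDerivAt G (g t) t)
    (hg : ContinuousOn g (Icc c d)) :
    G d - G c = ∫ t in c..d, g t :=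
  (intervalIntegral.integral_eq_sub_of_hasDeriv_right_of_le hcd hG
    (fun x hx => (hd x hx).hasDerivWithinAt)
    (hg.intervalIntegrable_of_Icc hcd)).symm

private lemma quadR (c d : ℝ) (hcd : c ≤ d) (G g : ℝ → ℝ) (M : ℝ)
    (hG : ContinuousOn G (Icc c d))
    (hd : ∀ t ∈ Ioo c d, HasDerivAt G (g t) t)
    (hg : ContinuousOn g (Icc c d))
    (hb : ∀ t ∈ Icc c d, |g t| ≤ M * (t - c)) :
    |G d - G c| ≤ M / 2 * (d - c) ^ 2 := by
  rw [ftc_aux c d hcd G g hG hd hg]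
  have h1 : |∫ t in c..d, g t| ≤ ∫ t in c..d, |g t| :=
    intervalIntegral.abs_integral_le_integral_abs hcd
  have h2 : (∫ t in c..d, |g t|) ≤ ∫ t in c..d, M * (t - c) :=
    intervalIntegral.integral_mono_on hcd (hg.abs.intervalIntegrable_of_Icc hcd)
      ((continuous_const.mul (continuous_id.sub continuous_const)).intervalIntegrable c d) hb
  have h3 : (∫ t in c..d, M * (t - c)) = M / 2 * (d - c) ^ 2 := by
    rw [intervalIntegral.integral_const_mul]
    have h4 : (∫ t in c..d, (t - c)) = ∫ t in (c - c)..(d - c), t :=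
      intervalIntegral.integral_comp_sub_right (fun t => t) c
    rw [h4, integral_id]
    ring
  linarith

private lemma quadL (c d : ℝ) (hcd : c ≤ d) (G g : ℝ → ℝ) (M : ℝ)
    (hG : ContinuousOn G (Icc c d))
    (hd : ∀ t ∈ Ioo c d, HasDerivAt G (g t) t)
    (hg : ContinuousOn g (Icc c d))
    (hb : ∀ t ∈ Icc c d, |g t| ≤ M * (d - t)) :
    |G d - G c| ≤ M / 2 * (d - c) ^ 2 := by
  rw [ftc_aux c d hcd G g hG hd hg]
  have h1 : |∫ t in c..d, g t| ≤ ∫ t in c..d, |g t| :=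
    intervalIntegral.abs_integral_le_integral_abs hcd
  have h2 : (∫ t in c..d, |g t|) ≤ ∫ t in c..d, M * (d - t) :=
    intervalIntegral.integral_mono_on hcd (hg.abs.intervalIntegrable_of_Icc hcd)
      ((continuous_const.mul (continuous_const.sub continuous_id)).intervalIntegrable c d) hb
  have h3 : (∫ t in c..d, M * (d - t)) = M / 2 * (d - c) ^ 2 := by
    have h5 : (∫ t in c..d, M * (d - t)) = ∫ t in c..d, (M * d - M * t) := by
      apply intervalIntegral.integral_congr; intro t _; ring
    rw [h5, intervalIntegral.integral_sub
      ((continuous_const : Continuous fun _ : ℝ => M * d).intervalIntegrable c d)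
      ((by fun_prop : Continuous fun t : ℝ => M * t).intervalIntegrable c d),
      intervalIntegral.integral_const, intervalIntegral.integral_const_mul, integral_id,
      smul_eq_mul]
    ring
  linarith

theorem stmt_4 (σ a : ℝ) (f : ℝ → ℝ) (hσ : 0 < σ)
    (hf : ContDiffOn ℝ 2 f (Icc (a - σ / 2) (a + σ / 2))) :
    ∃ R : ℝ,
      (∫ t in a..(a + σ / 2), f t) = σ / 4 * (3 * f a - f (a - σ / 2)) + R ∧
      |R| ≤ 5 * σ ^ 3 / 96 * ⨆ t ∈ Icc (a - σ / 2) (a + σ / 2), |iteratedDeriv 2 f t| := by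
  refine ⟨(∫ t in a..(a + σ / 2), f t) - σ / 4 * (3 * f a - f (a - σ / 2)), by ring, ?_⟩
  set h : ℝ := σ / 2 with hh
  have hh0 : 0 < h := by positivity
  set s : Set ℝ := Icc (a - h) (a + h) with hsdef
  have hlt : a - h < a + h := by linarith
  have hQ : UniqueDiffOn ℝ s := uniqueDiffOn_Icc hlt
  have has : a ∈ s := ⟨by linarith, by linarith⟩
  set g : ℝ → ℝ := derivWithin f s with hgdef
  set g2 : ℝ → ℝ := derivWithin g s with hg2def
  set M : ℝ := ⨆ t ∈ s, |iteratedDeriv 2 f t| with hMdef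
  have hfd : ∀ x ∈ s, HasDerivWithinAt f (g x) s x := fun x hx =>
    (hf.differentiableOn (by norm_num) x hx).hasDerivWithinAt
  have hgC : ContDiffOn ℝ 1 g s := hf.derivWithin hQ (by norm_num)
  have hgd : ∀ x ∈ s, HasDerivWithinAt g (g2 x) s x := fun x hx =>
    (hgC.differentiableOn one_ne_zero x hx).hasDerivWithinAt
  have hg2c : ContinuousOn g2 s := hgC.continuousOn_derivWithin hQ le_rfl
  have hfc : ContinuousOn f s := hf.continuousOn
  have hgc : ContinuousOn g s := hgC.continuousOn
  -- interior points: global iterated deriv equals local one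
  have hio : ∀ y ∈ Ioo (a - h) (a + h), iteratedDeriv 2 f y = g2 y := by
    intro y hy
    have hnb : s ∈ nhds y := Icc_mem_nhds hy.1 hy.2
    have hev : (deriv f) =ᶠ[nhds y] g := by
      filter_upwards [Ioo_mem_nhds hy.1 hy.2] with t ht
      exact ((hfd t (Ioo_subset_Icc_self ht)).hasDerivAt (Icc_mem_nhds ht.1 ht.2)).deriv
    have h1 : iteratedDeriv 2 f y = deriv (deriv f) y := by
      rw [show (2 : ℕ) = 1 + 1 from rfl, iteratedDeriv_succ, iteratedDeriv_one]
    rw [h1, hev.deriv_eq]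
    exact ((hgd y (Ioo_subset_Icc_self hy)).hasDerivAt hnb).deriv
  -- boundedness of the sup
  have hbddF : BddAbove (range fun t => ⨆ _ : t ∈ s, |iteratedDeriv 2 f t|) := by
    have hK : BddAbove ((fun t => |g2 t|) '' s) :=
      (isCompact_Icc.image_of_continuousOn hg2c.abs).bddAbove
    set K : ℝ := sSup ((fun t => |g2 t|) '' s) with hKdef
    refine ⟨max (max K (max |iteratedDeriv 2 f (a - h)| |iteratedDeriv 2 f (a + h)|)) 0, ?_⟩
    rintro _ ⟨t, rfl⟩
    show (⨆ _ : t ∈ s, |iteratedDeriv 2 f t|) ≤ _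
    by_cases hts : t ∈ s
    · rw [ciSup_pos hts]
      rcases eq_or_lt_of_le hts.1 with he | h1
      · exact le_max_of_le_left (le_max_of_le_right (le_max_of_le_left (by rw [← he])))
      rcases eq_or_lt_of_le hts.2 with he | h2
      · exact le_max_of_le_left (le_max_of_le_right (le_max_of_le_right (by rw [he])))
      · rw [hio t ⟨h1, h2⟩]
        exact le_max_of_le_left (le_max_of_le_left (le_csSup hK ⟨t, hts, rfl⟩))
    · haveI : IsEmpty (t ∈ s) := isEmpty_Prop.mpr hts
      rw [Real.iSup_of_isEmpty]
      exact le_max_right _ _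
  have hMle : ∀ y ∈ Ioo (a - h) (a + h), |g2 y| ≤ M := by
    intro y hy
    rw [← hio y hy, hMdef]
    calc |iteratedDeriv 2 f y| = ⨆ _ : y ∈ s, |iteratedDeriv 2 f y| :=
          (ciSup_pos (f := fun _ => |iteratedDeriv 2 f y|) (show y ∈ s from Ioo_subset_Icc_self hy)).symm
      _ ≤ ⨆ t ∈ s, |iteratedDeriv 2 f t| := le_ciSup hbddF y
  have hM : ∀ y ∈ s, |g2 y| ≤ M := by
    have hc : closure (Ioo (a - h) (a + h)) = s := closure_Ioo hlt.ne
    intro y hy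
    exact le_on_closure (f := fun y => |g2 y|) (g := fun _ => M) hMle
      (by rw [hc]; exact hg2c.abs) continuousOn_const (by rw [hc]; exact hy)
  have hM0 : 0 ≤ M := le_trans (abs_nonneg _) (hM a has)
  -- Lipschitz bound on g
  have hlip : ∀ y ∈ s, |g y - g a| ≤ M * |y - a| := by
    intro y hy
    have := Convex.norm_image_sub_le_of_norm_hasDerivWithin_le (f := g) (f' := g2)
      hgd (fun x hx => by simpa [Real.norm_eq_abs] using hM x hx) (convex_Icc _ _) has hy
    simpa [Real.norm_eq_abs] using this
  -- the auxiliary function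
  set φ : ℝ → ℝ := fun t => f t - f a - (t - a) * g a with hφdef
  have hφa : φ a = 0 := by simp [hφdef]
  have hφd : ∀ t ∈ Ioo (a - h) (a + h), HasDerivAt φ (g t - g a) t := by
    intro t ht
    have h1 : HasDerivAt f (g t) t :=
      (hfd t (Ioo_subset_Icc_self ht)).hasDerivAt (Icc_mem_nhds ht.1 ht.2)
    have h2 : HasDerivAt (fun t => (t - a) * g a) (g a) t := by
      simpa using ((hasDerivAt_id t).sub_const a).mul_const (g a)
    exact (h1.sub_const (f a)).sub h2
  have hφc : ContinuousOn φ s := by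
    apply ContinuousOn.sub (hfc.sub continuousOn_const)
    exact ((continuous_id.sub continuous_const).mul continuous_const).continuousOn
  have hψc : ContinuousOn (fun t => g t - g a) s := hgc.sub continuousOn_const
  -- right quadratic bound
  have hquadR : ∀ y ∈ Icc a (a + h), |φ y| ≤ M / 2 * (y - a) ^ 2 := by
    intro y hy
    have hsub : Icc a y ⊆ s := Icc_subset_Icc (by linarith) hy.2
    have := quadR a y hy.1 φ (fun t => g t - g a) M (hφc.mono hsub)
      (fun t ht => hφd t ⟨by linarith [ht.1], by linarith [ht.2, hy.2]⟩)
      (hψc.mono hsub)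
      (fun t ht => by
        have := hlip t (hsub ht)
        rwa [abs_of_nonneg (by linarith [ht.1] : (0:ℝ) ≤ t - a)] at this)
    rwa [hφa, sub_zero] at this
  -- left quadratic bound
  have hquadL : |φ (a - h)| ≤ M / 2 * h ^ 2 := by
    have hsub : Icc (a - h) a ⊆ s := Icc_subset_Icc le_rfl (by linarith)
    have := quadL (a - h) a (by linarith) φ (fun t => g t - g a) M (hφc.mono hsub)
      (fun t ht => hφd t ⟨ht.1, by linarith [ht.2]⟩)
      (hψc.mono hsub)
      (fun t ht => by
        have h1 := hlip t (hsub ht)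
        rwa [abs_of_nonpos (by linarith [ht.2] : t - a ≤ 0), neg_sub] at h1)
    rw [hφa, zero_sub, abs_neg] at this
    calc |φ (a - h)| ≤ M / 2 * (a - (a - h)) ^ 2 := this
      _ = M / 2 * h ^ 2 := by ring_nf
  -- integral decomposition
  have haah : a ≤ a + h := by linarith
  have hsub2 : Icc a (a + h) ⊆ s := Icc_subset_Icc (by linarith) le_rfl
  have hintφ : IntervalIntegrable φ MeasureTheory.volume a (a + h) :=
    (hφc.mono hsub2).intervalIntegrable_of_Icc haah
  have hkey : (∫ t in a..(a + h), f t)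
      = (∫ t in a..(a + h), φ t) + (h * f a + h ^ 2 / 2 * g a) := by
    have h1 : (∫ t in a..(a + h), f t)
        = ∫ t in a..(a + h), (φ t + (f a + (t - a) * g a)) := by
      apply intervalIntegral.integral_congr; intro t _; simp only [hφdef]; ring
    rw [h1, intervalIntegral.integral_add hintφ
      ((by fun_prop : Continuous fun t : ℝ => f a + (t - a) * g a).intervalIntegrable a (a + h))]
    congr 1
    rw [intervalIntegral.integral_add intervalIntegrable_const
      ((by fun_prop : Continuous fun t : ℝ => (t - a) * g a).intervalIntegrable a (a + h)),
      intervalIntegral.integral_const, intervalIntegral.integral_mul_const]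
    have h4 : (∫ t in a..(a + h), (t - a)) = ∫ t in (a - a)..(a + h - a), t :=
      intervalIntegral.integral_comp_sub_right (fun t => t) a
    rw [h4, integral_id]
    simp
  -- bound on the integral of φ
  have hE1 : |∫ t in a..(a + h), φ t| ≤ M * h ^ 3 / 6 := by
    have h1 : |∫ t in a..(a + h), φ t| ≤ ∫ t in a..(a + h), |φ t| :=
      intervalIntegral.abs_integral_le_integral_abs haah
    have h2 : (∫ t in a..(a + h), |φ t|) ≤ ∫ t in a..(a + h), M / 2 * (t - a) ^ 2 :=
      intervalIntegral.integral_mono_on haah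
        ((hφc.mono hsub2).abs.intervalIntegrable_of_Icc haah)
        ((by fun_prop : Continuous fun t : ℝ => M / 2 * (t - a) ^ 2).intervalIntegrable a (a + h)) hquadR
    have h3 : (∫ t in a..(a + h), M / 2 * (t - a) ^ 2) = M * h ^ 3 / 6 := by
      rw [intervalIntegral.integral_const_mul]
      have h4 : (∫ t in a..(a + h), (t - a) ^ 2) = ∫ t in (a - a)..(a + h - a), t ^ 2 :=
        intervalIntegral.integral_comp_sub_right (fun t => t ^ 2) a
      rw [h4]
      simp [integral_pow]
      ring
    linarith
  -- conclude
  have hfmh : f (a - h) = φ (a - h) + f a - h * g a := by simp [hφdef]; ring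
  have hR : (∫ t in a..(a + σ / 2), f t) - σ / 4 * (3 * f a - f (a - σ / 2))
      = (∫ t in a..(a + h), φ t) + h / 2 * φ (a - h) := by
    rw [show a + σ / 2 = a + h from rfl, show a - σ / 2 = a - h from rfl, hkey, hfmh]
    ring
  rw [hR]
  have hgoal : |(∫ t in a..(a + h), φ t) + h / 2 * φ (a - h)|
      ≤ M * h ^ 3 / 6 + h / 2 * (M / 2 * h ^ 2) := by
    calc |(∫ t in a..(a + h), φ t) + h / 2 * φ (a - h)|
        ≤ |∫ t in a..(a + h), φ t| + |h / 2 * φ (a - h)| := abs_add_le _ _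
      _ ≤ M * h ^ 3 / 6 + h / 2 * (M / 2 * h ^ 2) := by
          rw [abs_mul, abs_of_nonneg (by linarith : (0:ℝ) ≤ h / 2)]
          exact add_le_add hE1 (by nlinarith [hquadL, abs_nonneg (φ (a - h))])
  calc |(∫ t in a..(a + h), φ t) + h / 2 * φ (a - h)|
      ≤ M * h ^ 3 / 6 + h / 2 * (M / 2 * h ^ 2) := hgoal
    _ = 5 * σ ^ 3 / 96 * M := by rw [hh]; ring
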